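/- Let (a_0, a_1, ..., a_N) be a finite sequence of real numbers and f a real analytic function on [0, N] (not identically zero) such that f(n) = (-1)^n * a_n for each integer 0 ≤ n ≤ N. Then the number of zeros of f on [0, N], counted with multiplicities, is at least N minus the number of sign changes of the sequence (a_n). Here a sign change occurs at index m if there exists k < m with a_k * a_m < 0 and a_j = 0 for all k < j < m. -/

import Mathlib

/-- A sign change of the real sequence `a` occurs at place `m`. -/
def SignChangeAt (a : ℕ → ℝ) (m : ℕ) : Prop :=
  ∃ k < m, a k * a m < 0 ∧ ∀ j, k < j → j < m → a j = 0

/-- `f` vanishes to exact order `n` at `x`. -/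
def ZeroMult (f : ℝ → ℝ) (x : ℝ) (n : ℕ) : Prop :=
  ∃ g : ℝ → ℝ, AnalyticAt ℝ g x ∧ g x ≠ 0 ∧ ∀ᶠ y in nhds x, f y = (y - x) ^ n * g y

open Set Filter Topology





open Classical in
noncomputable def mord (f : ℝ → ℝ) (x : ℝ) : ℕ :=
  if h : AnalyticAt ℝ f x then (analyticOrderAt f x).toNat else 0

lemma mord_spec {f : ℝ → ℝ} {x : ℝ} (hA : AnalyticAt ℝ f x) (hfin : analyticOrderAt f x ≠ ⊤) :
    ZeroMult f x (mord f x) ∧ (f x = 0 → 0 < mord f x) := by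
  have hm : mord f x = (analyticOrderAt f x).toNat := by
    rw [mord]; rw [dif_pos hA]
  have hord : analyticOrderAt f x = (mord f x : ℕ∞) := by rw [hm, ENat.coe_toNat hfin]
  obtain ⟨g, hg, hgx, heq⟩ := (hA.analyticOrderAt_eq_natCast (n := mord f x)).mp hord
  have hZM : ZeroMult f x (mord f x) := ⟨g, hg, hgx, by
    filter_upwards [heq] with y hy; rw [hy, smul_eq_mul]⟩
  refine ⟨hZM, fun hx0 => ?_⟩
  by_contra n0
  have h0 : mord f x = 0 := by omega
  have := heq.self_of_nhds
  rw [h0, pow_zero, one_smul] at this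
  rw [hx0] at this
  exact hgx this.symm

lemma order_ne_top {N : ℕ} {f : ℝ → ℝ} (hf : AnalyticOnNhd ℝ f (Set.Icc (0 : ℝ) N))
    (hne : ∃ x ∈ Set.Icc (0 : ℝ) N, f x ≠ 0) {x : ℝ} (hx : x ∈ Set.Icc (0 : ℝ) N) :
    analyticOrderAt f x ≠ ⊤ := by
  intro htop
  rw [analyticOrderAt_eq_top] at htop
  obtain ⟨x₀, hx₀, hfx₀⟩ := hne
  exact hfx₀ (hf.eqOn_zero_of_preconnected_of_eventuallyEq_zero isPreconnected_Icc hx htop hx₀)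

lemma zeros_finite {N : ℕ} {f : ℝ → ℝ} (hf : AnalyticOnNhd ℝ f (Set.Icc (0 : ℝ) N))
    (hne : ∃ x ∈ Set.Icc (0 : ℝ) N, f x ≠ 0) :
    {x ∈ Set.Icc (0 : ℝ) N | f x = 0}.Finite := by
  by_contra hinf
  have hinf' : {x ∈ Set.Icc (0 : ℝ) N | f x = 0}.Infinite := hinf
  obtain ⟨x, hxK, hacc⟩ := hinf'.exists_accPt_of_subset_isCompact isCompact_Icc
    (Set.sep_subset _ _)
  have hfreq : ∃ᶠ z in 𝓝[≠] x, f z = 0 := by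
    have : (𝓝[≠] x ⊓ 𝓟 {x_1 ∈ Set.Icc (0 : ℝ) N | f x_1 = 0}).NeBot := hacc
    have h2 : ∃ᶠ z in 𝓝[≠] x, z ∈ {x_1 ∈ Set.Icc (0 : ℝ) N | f x_1 = 0} :=
      Filter.frequently_mem_iff_neBot.mpr this
    exact h2.mono fun z hz => hz.2
  obtain ⟨x₀, hx₀, hfx₀⟩ := hne
  exact hfx₀ (hf.eqOn_zero_of_preconnected_of_frequently_eq_zero isPreconnected_Icc hxK hfreq hx₀)


lemma same_sign {a b c : ℝ} (hab : 0 < a * b) : (0 < a * c ↔ 0 < b * c) := by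
  rcases mul_pos_iff.mp hab with ⟨ha, hb⟩ | ⟨ha, hb⟩ <;>
    constructor <;> intro h <;> rcases mul_pos_iff.mp h with ⟨h1, h2⟩ | ⟨h1, h2⟩ <;>
    first
      | exact mul_pos (by linarith) h2
      | exact mul_pos_of_neg_of_neg (by linarith) h2
      | linarith

lemma sign_trans {a b c : ℝ} (ha : a ≠ 0) (hb : b ≠ 0) (hc : c ≠ 0) :
    (0 < a * c ↔ ((0 < a * b) ↔ (0 < b * c))) := by
  rcases ha.lt_or_gt with ha | ha <;> rcases hb.lt_or_gt with hb | hb <;>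
    rcases hc.lt_or_gt with hc | hc <;>
    simp [mul_pos_iff, ha, hb, hc, asymm, ha.asymm, hb.asymm, hc.asymm] <;> intro h <;> linarith

lemma pos_mul_of_no_zero {f : ℝ → ℝ} {u v : ℝ} (huv : u ≤ v)
    (hc : ContinuousOn f (Icc u v)) (h : ∀ x ∈ Icc u v, f x ≠ 0) : 0 < f u * f v := by
  have hu : u ∈ Icc u v := ⟨le_refl u, huv⟩
  have hv : v ∈ Icc u v := ⟨huv, le_refl v⟩
  rcases lt_trichotomy (f u * f v) 0 with hlt | heq | hgt
  · exfalso
    rcases mul_neg_iff.mp hlt with ⟨h1, h2⟩ | ⟨h1, h2⟩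
    · obtain ⟨x, hx, hfx⟩ := intermediate_value_Icc' huv hc ⟨h2.le, h1.le⟩
      exact h x hx hfx
    · obtain ⟨x, hx, hfx⟩ := intermediate_value_Icc huv hc ⟨h1.le, h2.le⟩
      exact h x hx hfx
  · exact absurd heq (mul_ne_zero (h u hu) (h v hv))
  · exact hgt

lemma parity (f : ℝ → ℝ) (v : ℝ) (Z : Finset ℝ) :
    ∀ (u : ℝ), u ≤ v →
    (∀ x ∈ Set.Icc u v, AnalyticAt ℝ f x) →
    (∀ x ∈ Set.Icc u v, f x = 0 → 0 < mord f x ∧ ZeroMult f x (mord f x)) →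
    f u ≠ 0 → f v ≠ 0 →
    (∀ z : ℝ, z ∈ Z ↔ (z ∈ Set.Ioo u v ∧ f z = 0)) →
    (0 < f u * f v ↔ Even (∑ x ∈ Z, mord f x)) := by
  induction Z using Finset.strongInduction with
  | _ Z ih =>
    intro u huv hA hords hu hv hZ
    rcases Z.eq_empty_or_nonempty with rfl | hZne
    · have hpos : 0 < f u * f v := by
        refine pos_mul_of_no_zero huv
          (fun t ht => (hA t ht).continuousAt.continuousWithinAt) (fun t ht hft => ?_)
        rcases eq_or_lt_of_le ht.1 with rfl | h1
        · exact hu hft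
        rcases eq_or_lt_of_le ht.2 with rfl | h2
        · exact hv hft
        · simpa using (hZ t).mpr ⟨⟨h1, h2⟩, hft⟩
      simpa [hpos] using even_zero
    · set x := Z.min' hZne with hxdef
      have hxZ : x ∈ Z := Z.min'_mem hZne
      obtain ⟨hxIoo, hfx⟩ := (hZ x).mp hxZ
      have hxIcc : x ∈ Icc u v := ⟨hxIoo.1.le, hxIoo.2.le⟩
      obtain ⟨hnpos, g, hg, hgx, heq⟩ :
          0 < mord f x ∧ ∃ g : ℝ → ℝ, AnalyticAt ℝ g x ∧ g x ≠ 0 ∧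
            ∀ᶠ y in 𝓝 x, f y = (y - x) ^ (mord f x) * g y := by
        obtain ⟨h1, h2⟩ := hords x hxIcc hfx
        exact ⟨h1, h2⟩
      set n := mord f x with hndef
      have hsign : ∀ᶠ y in 𝓝 x, 0 < g y * g x := by
        have hopen : IsOpen {t : ℝ | 0 < t * g x} :=
          isOpen_lt continuous_const (continuous_id.mul continuous_const)
        have hmem : g x ∈ {t : ℝ | 0 < t * g x} := by
          simp only [mem_setOf_eq]; exact mul_self_pos.mpr hgx
        exact hg.continuousAt.eventually_mem (hopen.mem_nhds hmem)
      have havoid : ∀ᶠ y in 𝓝 x, y ∉ (↑(Z.erase x) : Set ℝ) := by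
        have hcl : IsClosed (↑(Z.erase x) : Set ℝ) := (Z.erase x).finite_toSet.isClosed
        have : (↑(Z.erase x) : Set ℝ)ᶜ ∈ 𝓝 x :=
          hcl.isOpen_compl.mem_nhds (by simp)
        exact this
      have hcomb := heq.and (hsign.and havoid)
      rw [Metric.eventually_nhds_iff] at hcomb
      obtain ⟨δ, hδpos, hδ⟩ := hcomb
      set y₁ := max (x - δ/2) ((u + x)/2) with hy₁def
      set y₂ := min (x + δ/2) ((x + v)/2) with hy₂def
      have hy₁x : y₁ < x := max_lt (by linarith) (by linarith [hxIoo.1])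
      have huy₁ : u < y₁ := lt_max_of_lt_right (by linarith [hxIoo.1])
      have hy₁d : dist y₁ x < δ := by
        rw [Real.dist_eq, abs_lt]
        constructor
        · have : x - δ/2 ≤ y₁ := le_max_left _ _
          linarith
        · linarith
      have hxy₂ : x < y₂ := lt_min (by linarith) (by linarith [hxIoo.2])
      have hy₂v : y₂ < v := min_lt_of_right_lt (by linarith [hxIoo.2])
      have hy₂d : dist y₂ x < δ := by
        rw [Real.dist_eq, abs_lt]
        constructor
        · linarith
        · have : y₂ ≤ x + δ/2 := min_le_left _ _
          linarith
      obtain ⟨hfy₁eq, hgy₁, -⟩ := hδ hy₁d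
      obtain ⟨hfy₂eq, hgy₂, hy₂avoid⟩ := hδ hy₂d
      have hy₁Ioo : y₁ ∈ Ioo u v := ⟨huy₁, hy₁x.trans hxIoo.2⟩
      have hy₂Ioo : y₂ ∈ Ioo u v := ⟨hxIoo.1.trans hxy₂, hy₂v⟩
      have hfy₁ : f y₁ ≠ 0 := by
        intro h0
        have := (hZ y₁).mpr ⟨hy₁Ioo, h0⟩
        have := Z.min'_le y₁ this
        rw [← hxdef] at this
        linarith
      have hfy₂ : f y₂ ≠ 0 := by
        intro h0
        have hmem := (hZ y₂).mpr ⟨hy₂Ioo, h0⟩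
        have : y₂ ∈ Z.erase x := Finset.mem_erase.mpr ⟨hxy₂.ne', hmem⟩
        exact hy₂avoid (by simp only [Finset.coe_erase, Set.mem_diff, Finset.mem_coe,
          Set.mem_singleton_iff]; exact ⟨hmem, hxy₂.ne'⟩)
      -- step 1 : no zeros in [u, y₁]
      have h1 : 0 < f u * f y₁ := by
        refine pos_mul_of_no_zero huy₁.le
          (fun t ht => (hA t ⟨ht.1, ht.2.trans hy₁Ioo.2.le⟩).continuousAt.continuousWithinAt)
          (fun t ht hft => ?_)
        rcases eq_or_lt_of_le ht.1 with rfl | htu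
        · exact hu hft
        have htZ : t ∈ Z := (hZ t).mpr ⟨⟨htu, lt_of_le_of_lt ht.2 hy₁Ioo.2⟩, hft⟩
        have := Z.min'_le t htZ
        rw [← hxdef] at this
        linarith [ht.2]
      -- step 2 : sign across x
      have h2 : (0 < f y₁ * f y₂) ↔ Even n := by
        have hprod : f y₁ * f y₂ = ((y₁ - x) * (y₂ - x)) ^ n * (g y₁ * g y₂) := by
          rw [hfy₁eq, hfy₂eq, mul_pow]; ring
        have hgprod : 0 < g y₁ * g y₂ := by
          have := (same_sign hgy₁ (c := g y₂))
          have hx2 : 0 < g x * g y₂ := by linarith [mul_comm (g y₂) (g x) ▸ hgy₂]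
          exact this.mpr hx2
        have htneg : (y₁ - x) * (y₂ - x) < 0 :=
          mul_neg_of_neg_of_pos (by linarith) (by linarith)
        rw [hprod]
        rcases Nat.even_or_odd n with he | ho
        · simp only [he, iff_true]
          exact mul_pos (he.pow_pos htneg.ne) hgprod
        · have : ((y₁ - x) * (y₂ - x)) ^ n < 0 := ho.pow_neg htneg
          constructor
          · intro hc; nlinarith
          · intro hc; exact absurd hc (Nat.not_even_iff_odd.mpr ho)
      -- step 3 : induction on [y₂, v]
      have hZ' : ∀ z : ℝ, z ∈ Z.erase x ↔ (z ∈ Ioo y₂ v ∧ f z = 0) := by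
        intro z
        constructor
        · intro hz
          obtain ⟨hzx, hzZ⟩ := Finset.mem_erase.mp hz
          obtain ⟨hzIoo, hfz⟩ := (hZ z).mp hzZ
          have hzx' : x < z := lt_of_le_of_ne (Z.min'_le z hzZ) (Ne.symm hzx)
          have hzd : δ ≤ dist z x := by
            by_contra hc
            push_neg at hc
            exact (hδ hc).2.2 (by
              simp only [Finset.coe_erase, Set.mem_diff, Finset.mem_coe,
                Set.mem_singleton_iff]
              exact ⟨hzZ, hzx⟩)
          rw [Real.dist_eq] at hzd
          have : x + δ ≤ z := by
            rcases abs_cases (z - x) with ⟨h, _⟩ | ⟨h, _⟩ <;> linarith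
          refine ⟨⟨?_, hzIoo.2⟩, hfz⟩
          have : y₂ ≤ x + δ/2 := min_le_left _ _
          linarith
        · rintro ⟨hzIoo, hfz⟩
          have hzZ : z ∈ Z := (hZ z).mpr ⟨⟨lt_trans hxIoo.1 (lt_trans hxy₂ hzIoo.1), hzIoo.2⟩, hfz⟩
          exact Finset.mem_erase.mpr ⟨by linarith [hzIoo.1] , hzZ⟩
      have h3 : (0 < f y₂ * f v) ↔ Even (∑ t ∈ Z.erase x, mord f t) := by
        refine ih (Z.erase x) (Finset.erase_ssubset hxZ) y₂ hy₂v.le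
          (fun t ht => hA t ⟨le_trans (by linarith [hxIoo.1]) ht.1, ht.2⟩)
          (fun t ht => hords t ⟨le_trans (by linarith [hxIoo.1]) ht.1, ht.2⟩)
          hfy₂ hv hZ'
      -- combine
      have hsum : ∑ t ∈ Z, mord f t = n + ∑ t ∈ Z.erase x, mord f t := by
        rw [hndef, ← Finset.add_sum_erase _ _ hxZ]
      rw [hsum, Nat.even_add, ← h2, ← h3]
      rw [same_sign h1, sign_trans hfy₁ hfy₂ hv]

lemma sc_iff {a : ℕ → ℝ} {r m : ℕ} (hrm : r < m) (har : a r ≠ 0)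
    (hgap : ∀ j, r < j → j < m → a j = 0) : SignChangeAt a m ↔ a r * a m < 0 := by
  constructor
  · rintro ⟨k, hk, hneg, hz⟩
    rcases lt_trichotomy k r with h | rfl | h
    · exact absurd (hz r h hrm) har
    · exact hneg
    · rw [hgap k h hk] at hneg; simpa using hneg
  · intro h; exact ⟨r, hrm, h, hgap⟩

lemma not_sc_of_zero {a : ℕ → ℝ} {m : ℕ} (h : a m = 0) : ¬ SignChangeAt a m := by
  rintro ⟨k, hk, hneg, -⟩
  rw [h] at hneg; simpa using hneg

lemma sum_ge_card {f : ℝ → ℝ} {s : Finset ℕ} {W : Finset ℝ}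
    (h : ∀ j ∈ s, (j : ℝ) ∈ W) (h1 : ∀ j ∈ s, 1 ≤ mord f (j : ℝ)) :
    s.card ≤ ∑ x ∈ W, mord f x := by
  have himg : s.image (Nat.cast : ℕ → ℝ) ⊆ W := by
    intro x hx
    obtain ⟨j, hj, rfl⟩ := Finset.mem_image.mp hx
    exact h j hj
  calc s.card = (s.image (Nat.cast : ℕ → ℝ)).card :=
        (Finset.card_image_of_injective s Nat.cast_injective).symm
    _ ≤ ∑ x ∈ s.image (Nat.cast : ℕ → ℝ), mord f x := by
        rw [Finset.card_eq_sum_ones]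
        refine Finset.sum_le_sum fun x hx => ?_
        obtain ⟨j, hj, rfl⟩ := Finset.mem_image.mp hx
        exact h1 j hj
    _ ≤ ∑ x ∈ W, mord f x := Finset.sum_le_sum_of_subset himg

lemma Qlem (N : ℕ) (a : ℕ → ℝ) (f : ℝ → ℝ) [DecidablePred (SignChangeAt a)]
    (hA : ∀ x ∈ Set.Icc (0:ℝ) (N:ℝ), AnalyticAt ℝ f x)
    (hords : ∀ x ∈ Set.Icc (0:ℝ) (N:ℝ), f x = 0 → 0 < mord f x ∧ ZeroMult f x (mord f x))
    (hval : ∀ n : ℕ, n ≤ N → f n = (-1:ℝ)^n * a n)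
    (ZS : Finset ℝ) (hZS : ∀ x : ℝ, x ∈ ZS ↔ x ∈ Set.Icc (0:ℝ) (N:ℝ) ∧ f x = 0) :
    ∀ d r : ℕ, r ≤ N → N - r ≤ d → a r ≠ 0 →
    ((N : ℤ) - r) - (((Finset.Ioc r N).filter (SignChangeAt a)).card : ℤ)
      ≤ ∑ x ∈ ZS.filter (fun x => (r:ℝ) < x), mord f x := by
  intro d
  induction d with
  | zero =>
    intro r hrN hd _
    have : r = N := by omega
    subst this
    simp only [Finset.Ioc_self, Finset.filter_empty, Finset.card_empty, Nat.cast_zero, sub_self,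
      sub_zero]
    positivity
  | succ d ih =>
    intro r hrN hd har
    classical
    set K' := (Finset.Ioc r N).filter (fun n => a n ≠ 0) with hK'
    by_cases hKe : K' = ∅
    · -- all a j = 0 for r < j ≤ N : integers are zeros
      have hz : ∀ j : ℕ, r < j → j ≤ N → a j = 0 := by
        intro j h1 h2
        by_contra hne
        have : j ∈ K' := Finset.mem_filter.mpr ⟨Finset.mem_Ioc.mpr ⟨h1, h2⟩, hne⟩
        simp [hKe] at this
      have hsum : (Finset.Ioc r N).card ≤ ∑ x ∈ ZS.filter (fun x => (r:ℝ) < x), mord f x := by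
        refine sum_ge_card (fun j hj => ?_) (fun j hj => ?_)
        · rw [Finset.mem_Ioc] at hj
          have hmem : (j:ℝ) ∈ Set.Icc (0:ℝ) (N:ℝ) := by
            constructor <;> [positivity; exact_mod_cast hj.2]
          have hfj : f j = 0 := by
            rw [hval j hj.2, hz j hj.1 hj.2, mul_zero]
          exact Finset.mem_filter.mpr ⟨(hZS _).mpr ⟨hmem, hfj⟩, by exact_mod_cast hj.1⟩
        · rw [Finset.mem_Ioc] at hj
          have hmem : (j:ℝ) ∈ Set.Icc (0:ℝ) (N:ℝ) := by
            constructor <;> [positivity; exact_mod_cast hj.2]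
          have hfj : f j = 0 := by
            rw [hval j hj.2, hz j hj.1 hj.2, mul_zero]
          exact (hords _ hmem hfj).1
      have hcard : (Finset.Ioc r N).card = N - r := Nat.card_Ioc r N
      have : ((N : ℤ) - r) ≤ ∑ x ∈ ZS.filter (fun x => (r:ℝ) < x), mord f x := by
        rw [hcard] at hsum
        have : ((N - r : ℕ) : ℤ) ≤ (∑ x ∈ ZS.filter (fun x => (r:ℝ) < x), mord f x : ℤ) := by
          exact_mod_cast hsum
        omega
      have hnn : (0:ℤ) ≤ (((Finset.Ioc r N).filter (SignChangeAt a)).card : ℤ) := Int.ofNat_nonneg _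
      omega
    · -- K' nonempty : let m be the least index > r with a m ≠ 0
      have hKne : K'.Nonempty := Finset.nonempty_of_ne_empty hKe
      set m := K'.min' hKne with hmdef
      have hmK : m ∈ K' := K'.min'_mem hKne
      obtain ⟨hmIoc, ham⟩ := Finset.mem_filter.mp hmK
      obtain ⟨hrm, hmN⟩ := Finset.mem_Ioc.mp hmIoc
      have hgap : ∀ j, r < j → j < m → a j = 0 := by
        intro j h1 h2
        by_contra hne
        have hjK : j ∈ K' := Finset.mem_filter.mpr
          ⟨Finset.mem_Ioc.mpr ⟨h1, le_trans h2.le hmN⟩, hne⟩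
        have := K'.min'_le j hjK
        omega
      have hfr : f r ≠ 0 := by
        rw [hval r hrN]
        exact mul_ne_zero (pow_ne_zero _ (by norm_num)) har
      have hfm : f m ≠ 0 := by
        rw [hval m hmN]
        exact mul_ne_zero (pow_ne_zero _ (by norm_num)) ham
      have hrm' : (r:ℝ) < (m:ℝ) := by exact_mod_cast hrm
      have hr0 : (0:ℝ) ≤ (r:ℝ) := by positivity
      have hmN' : (m:ℝ) ≤ (N:ℝ) := by exact_mod_cast hmN
      have hsubIcc : Set.Icc (r:ℝ) (m:ℝ) ⊆ Set.Icc (0:ℝ) (N:ℝ) :=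
        Set.Icc_subset_Icc hr0 hmN'
      set W := ZS.filter (fun x => (r:ℝ) < x ∧ x < (m:ℝ)) with hWdef
      have hW : ∀ z : ℝ, z ∈ W ↔ (z ∈ Set.Ioo (r:ℝ) (m:ℝ) ∧ f z = 0) := by
        intro z
        constructor
        · intro hz
          obtain ⟨hzZS, hz1, hz2⟩ := Finset.mem_filter.mp hz
          exact ⟨⟨hz1, hz2⟩, ((hZS z).mp hzZS).2⟩
        · rintro ⟨⟨hz1, hz2⟩, hfz⟩
          refine Finset.mem_filter.mpr ⟨(hZS z).mpr ⟨⟨by linarith, by linarith⟩, hfz⟩, hz1, hz2⟩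
      have hpar : (0 < f r * f m) ↔ Even (∑ x ∈ W, mord f x) :=
        parity f (m:ℝ) W (r:ℝ) hrm'.le
          (fun x hx => hA x (hsubIcc hx))
          (fun x hx => hords x (hsubIcc hx)) hfr hfm hW
      set s := ∑ x ∈ W, mord f x with hsdef
      -- lower bound : the integers strictly between r and m are zeros of f
      have hlow : m - r - 1 ≤ s := by
        have := sum_ge_card (f := f) (s := Finset.Ioo r m) (W := W) ?_ ?_
        · simpa [Nat.card_Ioo] using this
        · intro j hj
          rw [Finset.mem_Ioo] at hj
          have hfj : f j = 0 := by
            rw [hval j (by omega), hgap j hj.1 hj.2, mul_zero]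
          refine (hW (j:ℝ)).mpr ⟨⟨by exact_mod_cast hj.1, by exact_mod_cast hj.2⟩, hfj⟩
        · intro j hj
          rw [Finset.mem_Ioo] at hj
          have hmem : (j:ℝ) ∈ Set.Icc (0:ℝ) (N:ℝ) := by
            constructor
            · positivity
            · have : j ≤ N := by omega
              exact_mod_cast this
          have hfj : f j = 0 := by
            rw [hval j (by omega), hgap j hj.1 hj.2, mul_zero]
          exact (hords _ hmem hfj).1
      -- if no sign change at m, one better
      have hsc : SignChangeAt a m ↔ a r * a m < 0 := sc_iff hrm har hgap
      have hfrm : f r * f m = (-1:ℝ)^(r+m) * (a r * a m) := by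
        rw [hval r hrN, hval m hmN]; ring
      have hlow2 : ¬ SignChangeAt a m → m - r ≤ s := by
        intro hnsc
        have hpos : 0 < a r * a m := by
          rcases (mul_ne_zero har ham).lt_or_gt with h | h
          · exact absurd (hsc.mpr h) hnsc
          · exact h
        have hparity : Even s ↔ Even (r + m) := by
          rw [← hpar, hfrm]
          rcases Nat.even_or_odd (r + m) with he | ho
          · rw [he.neg_one_pow]
            simpa [he] using hpos
          · rw [ho.neg_one_pow]
            constructor
            · intro hcon; exfalso; nlinarith
            · intro hcon; exact absurd hcon (Nat.not_even_iff_odd.mpr ho)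
        have h1 : s % 2 = (r + m) % 2 := by
          rcases Nat.even_or_odd s with he | hoo
          · rw [Nat.even_iff.mp he, (Nat.even_iff.mp (hparity.mp he)).symm]
          · have h2 := Nat.not_even_iff_odd.mpr hoo
            have h3 : ¬ Even (r + m) := fun hc => h2 (hparity.mpr hc)
            rw [Nat.odd_iff.mp hoo, Nat.odd_iff.mp (Nat.not_even_iff_odd.mp h3)]
        omega
      -- split the sign-change count
      have hcount : ((Finset.Ioc r N).filter (SignChangeAt a)).card
          = ((Finset.Ioc m N).filter (SignChangeAt a)).card
            + (if SignChangeAt a m then 1 else 0) := by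
        have hsplit : Finset.Ioc r N = Finset.Ioc r m ∪ Finset.Ioc m N :=
          (Finset.Ioc_union_Ioc_eq_Ioc hrm.le hmN).symm
        have hd1 : ((Finset.Ioc r m).filter (SignChangeAt a))
            = if SignChangeAt a m then {m} else ∅ := by
          ext j
          split_ifs with hscm <;> simp only [Finset.mem_filter, Finset.mem_Ioc,
            Finset.mem_singleton, Finset.notMem_empty, iff_false]
          · constructor
            · rintro ⟨⟨h1, h2⟩, hscj⟩
              rcases eq_or_lt_of_le h2 with h | h
              · exact h
              · exact absurd hscj (not_sc_of_zero (hgap j h1 h))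
            · rintro rfl
              exact ⟨⟨hrm, le_refl m⟩, hscm⟩
          · rintro ⟨⟨h1, h2⟩, hscj⟩
            rcases eq_or_lt_of_le h2 with h | h
            · exact hscm (h ▸ hscj)
            · exact (not_sc_of_zero (hgap j h1 h)) hscj
        have hdisj : Disjoint ((Finset.Ioc r m).filter (SignChangeAt a))
            ((Finset.Ioc m N).filter (SignChangeAt a)) := by
          refine Finset.disjoint_filter_filter ?_
          refine Finset.disjoint_left.mpr fun j hj1 hj2 => ?_
          rw [Finset.mem_Ioc] at hj1 hj2
          omega
        rw [hsplit, Finset.filter_union, Finset.card_union_of_disjoint hdisj, hd1]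
        split_ifs <;> simp [add_comm]
      -- split the zero sum
      have hsplitsum : ∑ x ∈ ZS.filter (fun x => (r:ℝ) < x), mord f x
          = s + ∑ x ∈ ZS.filter (fun x => (m:ℝ) < x), mord f x := by
        have hmZS : (m:ℝ) ∉ ZS := fun hc => hfm ((hZS _).mp hc).2
        have heq : ZS.filter (fun x => (r:ℝ) < x)
            = W ∪ ZS.filter (fun x => (m:ℝ) < x) := by
          ext z
          simp only [Finset.mem_filter, hWdef, Finset.mem_union]
          constructor
          · rintro ⟨hz, hrz⟩
            rcases lt_trichotomy z (m:ℝ) with h | h | h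
            · exact Or.inl ⟨hz, hrz, h⟩
            · exact absurd (h ▸ hz) hmZS
            · exact Or.inr ⟨hz, h⟩
          · rintro (⟨hz, h1, h2⟩ | ⟨hz, h⟩)
            · exact ⟨hz, h1⟩
            · exact ⟨hz, by linarith⟩
        have hdisj : Disjoint W (ZS.filter (fun x => (m:ℝ) < x)) := by
          refine Finset.disjoint_left.mpr fun z hz1 hz2 => ?_
          rw [hWdef, Finset.mem_filter] at hz1
          rw [Finset.mem_filter] at hz2
          linarith [hz1.2.2, hz2.2]
        rw [heq, Finset.sum_union hdisj]
      -- apply IH at m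
      have hih := ih m hmN (by omega) ham
      -- conclude
      rw [hcount, hsplitsum]
      have hs1 : ((m:ℤ) - r - 1) ≤ (s:ℤ) := by omega
      push_cast at hih ⊢
      by_cases hscm : SignChangeAt a m
      · simp only [if_pos hscm]
        push_cast
        linarith
      · have hs2 : ((m:ℤ) - r) ≤ (s:ℤ) := by
          have := hlow2 hscm
          omega
        simp only [if_neg hscm]
        push_cast
        linarith


set_option maxHeartbeats 1000000 in
/-- Lemma 4: for a real analytic `f` on `[0, N]`, not identically zero, with
`f n = (-1)^n a n`, the number of zeros of `f` on `[0, N]` counted with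
multiplicities is at least `N` minus the number of sign changes of `a`. -/
theorem zeros_ge_N_sub_signChanges (N : ℕ) (a : ℕ → ℝ) (f : ℝ → ℝ)
    (hf : AnalyticOnNhd ℝ f (Set.Icc (0 : ℝ) N))
    (hne : ∃ x ∈ Set.Icc (0 : ℝ) N, f x ≠ 0)
    (hval : ∀ n : ℕ, n ≤ N → f n = (-1 : ℝ) ^ n * a n) :
    ∃ (Z : Finset ℝ) (mult : ℝ → ℕ),
      (∀ x ∈ Z, x ∈ Set.Icc (0 : ℝ) N ∧ f x = 0 ∧ ZeroMult f x (mult x)) ∧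
      (N : ℤ) - ({m | m ≤ N ∧ SignChangeAt a m}.ncard : ℤ) ≤ (∑ x ∈ Z, mult x : ℤ) := by
  classical
  have hords : ∀ x ∈ Set.Icc (0:ℝ) (N:ℝ), f x = 0 →
      0 < mord f x ∧ ZeroMult f x (mord f x) := by
    intro x hx h0
    obtain ⟨h1, h2⟩ := mord_spec (hf x hx) (order_ne_top hf hne hx)
    exact ⟨h2 h0, h1⟩
  have hfin : {x ∈ Set.Icc (0:ℝ) (N:ℝ) | f x = 0}.Finite := zeros_finite hf hne
  set ZS : Finset ℝ := hfin.toFinset with hZSdef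
  have hZS : ∀ x : ℝ, x ∈ ZS ↔ x ∈ Set.Icc (0:ℝ) (N:ℝ) ∧ f x = 0 := by
    intro x
    rw [hZSdef, Set.Finite.mem_toFinset]
    exact Iff.rfl
  refine ⟨ZS, mord f, fun x hx => ?_, ?_⟩
  · obtain ⟨hx1, hx2⟩ := (hZS x).mp hx
    exact ⟨hx1, hx2, (hords x hx1 hx2).2⟩
  -- rewrite the sign-change count as a Finset card
  have hseteq : {m | m ≤ N ∧ SignChangeAt a m}
      = ↑((Finset.range (N+1)).filter (SignChangeAt a)) := by
    ext m
    simp [Nat.lt_succ_iff, and_comm]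
  rw [hseteq, Set.ncard_coe_finset]
  set C := ((Finset.range (N+1)).filter (SignChangeAt a)).card with hCdef
  set K := (Finset.range (N+1)).filter (fun n => a n ≠ 0) with hKdef
  by_cases hKe : K = ∅
  · -- all a n = 0 : all integers 0..N are zeros of f
    have hz : ∀ j : ℕ, j ≤ N → f j = 0 := by
      intro j hj
      have haj : a j = 0 := by
        by_contra hne'
        have : j ∈ K := Finset.mem_filter.mpr ⟨Finset.mem_range.mpr (by omega), hne'⟩
        simp [hKe] at this
      rw [hval j hj, haj, mul_zero]
    have hsum : (Finset.range (N+1)).card ≤ ∑ x ∈ ZS, mord f x := by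
      refine sum_ge_card (fun j hj => ?_) (fun j hj => ?_)
      · rw [Finset.mem_range] at hj
        have hmem : (j:ℝ) ∈ Set.Icc (0:ℝ) (N:ℝ) :=
          ⟨by positivity, by exact_mod_cast Nat.lt_succ_iff.mp hj⟩
        exact (hZS _).mpr ⟨hmem, hz j (by omega)⟩
      · rw [Finset.mem_range] at hj
        have hmem : (j:ℝ) ∈ Set.Icc (0:ℝ) (N:ℝ) :=
          ⟨by positivity, by exact_mod_cast Nat.lt_succ_iff.mp hj⟩
        exact (hords _ hmem (hz j (by omega))).1
    rw [Finset.card_range] at hsum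
    zify at hsum
    push_cast at hsum ⊢
    have : (0:ℤ) ≤ (C:ℤ) := Int.ofNat_nonneg _
    linarith
  · have hKne : K.Nonempty := Finset.nonempty_of_ne_empty hKe
    set r₀ := K.min' hKne with hr₀def
    have hr₀K : r₀ ∈ K := K.min'_mem hKne
    obtain ⟨hr₀range, har₀⟩ := Finset.mem_filter.mp hr₀K
    have hr₀N : r₀ ≤ N := Nat.lt_succ_iff.mp (Finset.mem_range.mp hr₀range)
    have hbelow : ∀ j : ℕ, j < r₀ → a j = 0 := by
      intro j hj
      by_contra hne'
      have : j ∈ K := Finset.mem_filter.mpr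
        ⟨Finset.mem_range.mpr (by omega), hne'⟩
      have := K.min'_le j this
      omega
    -- the sign-change counts over range (N+1) and over Ioc r₀ N agree
    have hC2 : C = ((Finset.Ioc r₀ N).filter (SignChangeAt a)).card := by
      rw [hCdef]
      congr 1
      ext m
      simp only [Finset.mem_filter, Finset.mem_range, Finset.mem_Ioc, Nat.lt_succ_iff]
      constructor
      · rintro ⟨hm, hsc⟩
        refine ⟨⟨?_, hm⟩, hsc⟩
        rcases lt_trichotomy m r₀ with h | rfl | h
        · exact absurd hsc (not_sc_of_zero (hbelow m h))
        · obtain ⟨k, hk, hneg, -⟩ := hsc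
          rw [hbelow k hk] at hneg
          simp at hneg
        · exact h
      · rintro ⟨⟨-, hm⟩, hsc⟩
        exact ⟨hm, hsc⟩
    -- sum over zeros below r₀
    have hlowsum : r₀ ≤ ∑ x ∈ ZS.filter (fun x => x < (r₀:ℝ)), mord f x := by
      have := sum_ge_card (f := f) (s := Finset.range r₀)
        (W := ZS.filter (fun x => x < (r₀:ℝ))) ?_ ?_
      · simpa using this
      · intro j hj
        rw [Finset.mem_range] at hj
        have hmem : (j:ℝ) ∈ Set.Icc (0:ℝ) (N:ℝ) :=
          ⟨by positivity, by exact_mod_cast (by omega : j ≤ N)⟩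
        have hfj : f j = 0 := by
          rw [hval j (by omega), hbelow j hj, mul_zero]
        refine Finset.mem_filter.mpr ⟨(hZS _).mpr ⟨hmem, hfj⟩, by exact_mod_cast hj⟩
      · intro j hj
        rw [Finset.mem_range] at hj
        have hmem : (j:ℝ) ∈ Set.Icc (0:ℝ) (N:ℝ) :=
          ⟨by positivity, by exact_mod_cast (by omega : j ≤ N)⟩
        have hfj : f j = 0 := by
          rw [hval j (by omega), hbelow j hj, mul_zero]
        exact (hords _ hmem hfj).1
    -- Qlem at r₀
    have hQ := Qlem N a f hf hords hval ZS hZS N r₀ hr₀N (by omega) har₀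
    rw [← hC2] at hQ
    -- split the total sum
    have hsplit := Finset.sum_filter_add_sum_filter_not ZS (fun x => x < (r₀:ℝ)) (mord f)
    have hsub : ZS.filter (fun x => (r₀:ℝ) < x) ⊆ ZS.filter (fun x => ¬ x < (r₀:ℝ)) := by
      intro z hz
      rw [Finset.mem_filter] at hz ⊢
      exact ⟨hz.1, by linarith [hz.2]⟩
    have hsub2 : ∑ x ∈ ZS.filter (fun x => (r₀:ℝ) < x), mord f x
        ≤ ∑ x ∈ ZS.filter (fun x => ¬ x < (r₀:ℝ)), mord f x :=
      Finset.sum_le_sum_of_subset hsub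
    zify at hlowsum hsub2 hsplit
    push_cast at hQ hlowsum hsub2 hsplit ⊢
    linarith
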